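/- Let φ ∈ J_{k,L;t}(χ₁ × ν) be a holomorphic Jacobi form of weight k and index t > 0 for an even positive definite lattice L, with SL₂(ℤ)-character (or multiplier system) χ₁ and Heisenberg character ν. Then the function ψ(τ,𝔷) := φ(τ, 2𝔷) is a holomorphic Jacobi form of weight k and index 4t for L with the same SL₂(ℤ)-character χ₁ and with trivial Heisenberg character, i.e. ψ ∈ J_{k,L;4t}(χ₁ × id). -/

import Mathlib

open Complex Matrix
open scoped Real BigOperators Classical

noncomputable section

abbrev SL2Z := Matrix.SpecialLinearGroup (Fin 2) ℤ

/-- The integral bilinear form attached to a Gram matrix `S`. -/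
def bilinZ {ι : Type*} [Fintype ι] (S : Matrix ι ι ℤ) (x y : ι → ℤ) : ℤ :=
  ∑ i, ∑ j, x i * S i j * y j

def bilinQ {ι : Type*} [Fintype ι] (S : Matrix ι ι ℤ) (x y : ι → ℚ) : ℚ :=
  ∑ i, ∑ j, x i * (S i j : ℚ) * y j

def bilinR {ι : Type*} [Fintype ι] (S : Matrix ι ι ℤ) (x y : ι → ℝ) : ℝ :=
  ∑ i, ∑ j, x i * (S i j : ℝ) * y j

def bilinC {ι : Type*} [Fintype ι] (S : Matrix ι ι ℤ) (x y : ι → ℂ) : ℂ :=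
  ∑ i, ∑ j, x i * (S i j : ℂ) * y j

/-- `S` is the Gram matrix of an even positive definite lattice. -/
structure IsEvenPosDef {ι : Type*} [Fintype ι] (S : Matrix ι ι ℤ) : Prop where
  symm : S.IsSymm
  posdef : ∀ x : ι → ℚ, x ≠ 0 → 0 < bilinQ S x x
  even_diag : ∀ i, (2 : ℤ) ∣ S i i

/-- `l ∈ (1/2) L^∨`, written in lattice coordinates:  `2(l,x) ∈ ℤ` for every lattice vector. -/
def InHalfDual {ι : Type*} [Fintype ι] (S : Matrix ι ι ℤ) (l : ι → ℚ) : Prop :=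
  ∀ x : ι → ℤ, ∃ m : ℤ, 2 * bilinQ S l (fun i => (x i : ℚ)) = m

/-- `φ` is a holomorphic Jacobi form of weight `k` and index `t` for the lattice `(ℤ^ι, S)`
with `SL₂(ℤ)`-character (multiplier system) `χ`, Heisenberg character `ν`,
and Fourier coefficients `f`. -/
structure IsJacobiForm {ι : Type*} [Fintype ι] (S : Matrix ι ι ℤ) (k t : ℚ)
    (χ : SL2Z → ℂ) (ν : (ι → ℤ) → (ι → ℤ) → ℂ)
    (f : ℚ × (ι → ℚ) → ℂ) (φ : ℂ → (ι → ℂ) → ℂ) : Prop where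
  holo : DifferentiableOn ℂ (fun p : ℂ × (ι → ℂ) => φ p.1 p.2) {p | 0 < p.1.im}
  modular : ∀ A : SL2Z, ∀ τ : ℂ, 0 < τ.im → ∀ z : ι → ℂ,
    φ (((A.1 0 0 : ℂ) * τ + (A.1 0 1 : ℂ)) / ((A.1 1 0 : ℂ) * τ + (A.1 1 1 : ℂ)))
        (fun i => z i / ((A.1 1 0 : ℂ) * τ + (A.1 1 1 : ℂ)))
      = χ A * ((A.1 1 0 : ℂ) * τ + (A.1 1 1 : ℂ)) ^ (k : ℂ)
        * Complex.exp ((π : ℂ) * I * (t : ℂ) * (A.1 1 0 : ℂ) * bilinC S z z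
            / ((A.1 1 0 : ℂ) * τ + (A.1 1 1 : ℂ)))
        * φ τ z
  elliptic : ∀ x y : ι → ℤ, ∀ τ : ℂ, 0 < τ.im → ∀ z : ι → ℂ,
    φ τ (fun i => z i + (x i : ℂ) * τ + (y i : ℂ))
      = ν x y * Complex.exp (-((π : ℂ) * I * (t : ℂ))
            * ((bilinZ S x x : ℂ) * τ + 2 * bilinC S (fun i => (x i : ℂ)) z))
        * φ τ z
  support : ∀ p : ℚ × (ι → ℚ), f p ≠ 0 →
    0 ≤ p.1 ∧ InHalfDual S p.2 ∧ 0 ≤ 2 * p.1 * t - bilinQ S p.2 p.2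
  expansion : ∀ τ : ℂ, 0 < τ.im → ∀ z : ι → ℂ,
    HasSum (fun p : ℚ × (ι → ℚ) =>
        f p * Complex.exp (2 * (π : ℂ) * I *
          ((p.1 : ℂ) * τ + bilinC S (fun i => (p.2 i : ℂ)) z))) (φ τ z)

/-- The Fourier coefficients `f` are supported on indices of positive hyperbolic norm
(cusp form condition). -/
def IsCuspSupport {ι : Type*} [Fintype ι] (S : Matrix ι ι ℤ) (t : ℚ)
    (f : ℚ × (ι → ℚ) → ℂ) : Prop :=
  ∀ p : ℚ × (ι → ℚ), f p ≠ 0 → 0 < 2 * p.1 * t - bilinQ S p.2 p.2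

/-- `c` is a root of unity. -/
def HasFiniteOrder (c : ℂ) : Prop := ∃ N : ℕ, 0 < N ∧ c ^ N = 1

section Helpers
variable {ι : Type*} [Fintype ι]

lemma bilinZ_cast (S : Matrix ι ι ℤ) (x y : ι → ℤ) :
    bilinC S (fun i => (x i : ℂ)) (fun i => (y i : ℂ)) = (bilinZ S x y : ℂ) := by
  simp [bilinC, bilinZ]

lemma bilinC_expand (S : Matrix ι ι ℤ) (x x' y' : ι → ℤ) (z : ι → ℂ) (τ : ℂ) :
    bilinC S (fun i => (x i : ℂ)) (fun i => z i + (x' i : ℂ) * τ + (y' i : ℂ))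
      = bilinC S (fun i => (x i : ℂ)) z + (bilinZ S x x' : ℂ) * τ + (bilinZ S x y' : ℂ) := by
  simp only [bilinC, bilinZ]
  push_cast
  simp only [Finset.sum_mul, ← Finset.sum_add_distrib]
  exact Finset.sum_congr rfl fun i _ => Finset.sum_congr rfl fun j _ => by ring

lemma bilinZ_symm {S : Matrix ι ι ℤ} (hS : S.IsSymm) (x y : ι → ℤ) :
    bilinZ S x y = bilinZ S y x := by
  unfold bilinZ
  rw [Finset.sum_comm]
  exact Finset.sum_congr rfl fun i _ => Finset.sum_congr rfl fun j _ => by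
    rw [← hS.apply i j]; ring

lemma bilinZ_expand4 (S : Matrix ι ι ℤ) (x x' y y' : ι → ℤ) :
    bilinZ S (fun i => x i + x' i) (fun i => y i + y' i)
      = bilinZ S x y + bilinZ S x y' + bilinZ S x' y + bilinZ S x' y' := by
  unfold bilinZ
  simp only [← Finset.sum_add_distrib]
  exact Finset.sum_congr rfl fun i _ => Finset.sum_congr rfl fun j _ => by ring

lemma bilinZ_add_add {S : Matrix ι ι ℤ} (hS : S.IsSymm) (x x' : ι → ℤ) :
    bilinZ S (fun i => x i + x' i) (fun i => x i + x' i)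
      = bilinZ S x x + 2 * bilinZ S x x' + bilinZ S x' x' := by
  rw [bilinZ_expand4, bilinZ_symm hS x' x]; ring

lemma bilinC_addl (S : Matrix ι ι ℤ) (x x' : ι → ℤ) (z : ι → ℂ) :
    bilinC S (fun i => ((x i + x' i : ℤ) : ℂ)) z
      = bilinC S (fun i => (x i : ℂ)) z + bilinC S (fun i => (x' i : ℂ)) z := by
  simp only [bilinC, ← Finset.sum_add_distrib]
  exact Finset.sum_congr rfl fun i _ => Finset.sum_congr rfl fun j _ => by push_cast; ring

lemma bilinZ_two_two (S : Matrix ι ι ℤ) (x y : ι → ℤ) :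
    bilinZ S (fun i => 2 * x i) (fun i => 2 * y i) = 4 * bilinZ S x y := by
  unfold bilinZ
  simp only [Finset.mul_sum]
  exact Finset.sum_congr rfl fun i _ => Finset.sum_congr rfl fun j _ => by ring

lemma bilinC_two_two (S : Matrix ι ι ℤ) (x y : ι → ℂ) :
    bilinC S (fun i => 2 * x i) (fun i => 2 * y i) = 4 * bilinC S x y := by
  unfold bilinC
  simp only [Finset.mul_sum]
  exact Finset.sum_congr rfl fun i _ => Finset.sum_congr rfl fun j _ => by ring

lemma bilinC_half_double (S : Matrix ι ι ℤ) (v : ι → ℚ) (w : ι → ℂ) :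
    bilinC S (fun i => ((v i / 2 : ℚ) : ℂ)) (fun i => 2 * w i)
      = bilinC S (fun i => ((v i : ℚ) : ℂ)) w := by
  unfold bilinC
  exact Finset.sum_congr rfl fun i _ => Finset.sum_congr rfl fun j _ => by push_cast; ring

lemma bilinQ_half (S : Matrix ι ι ℤ) (v : ι → ℚ) (w : ι → ℚ) :
    bilinQ S (fun i => v i / 2) w = bilinQ S v w / 2 := by
  unfold bilinQ
  rw [Finset.sum_div]
  exact Finset.sum_congr rfl fun i _ => by
    rw [Finset.sum_div]; exact Finset.sum_congr rfl fun j _ => by ring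

lemma bilinQ_half_half (S : Matrix ι ι ℤ) (v : ι → ℚ) :
    bilinQ S (fun i => v i / 2) (fun i => v i / 2) = bilinQ S v v / 4 := by
  unfold bilinQ
  rw [Finset.sum_div]
  exact Finset.sum_congr rfl fun i _ => by
    rw [Finset.sum_div]; exact Finset.sum_congr rfl fun j _ => by ring

lemma hfo_ne_zero {c : ℂ} (h : HasFiniteOrder c) : c ≠ 0 := by
  obtain ⟨N, hN, hc⟩ := h
  intro h0
  rw [h0, zero_pow hN.ne'] at hc
  exact zero_ne_one hc

end Helpers

section Nu
variable {ι : Type*} [Fintype ι]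

lemma bilinZ_neg_neg (S : Matrix ι ι ℤ) (x : ι → ℤ) :
    bilinZ S (fun i => -x i) (fun i => -x i) = bilinZ S x x := by
  unfold bilinZ
  exact Finset.sum_congr rfl fun i _ => Finset.sum_congr rfl fun j _ => by ring

lemma bilinC_neg_neg (S : Matrix ι ι ℤ) (x : ι → ℤ) (z : ι → ℂ) :
    bilinC S (fun i => ((-x i : ℤ) : ℂ)) (fun i => -z i)
      = bilinC S (fun i => (x i : ℂ)) z := by
  unfold bilinC
  exact Finset.sum_congr rfl fun i _ => Finset.sum_congr rfl fun j _ => by push_cast; ring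

lemma bilinZ_zero (S : Matrix ι ι ℤ) (y : ι → ℤ) :
    bilinZ S (fun _ => 0) y = 0 := by
  simp [bilinZ]

lemma nu_double_trivial (S : Matrix ι ι ℤ) (hS : S.IsSymm)
    (k t : ℚ) (χ : SL2Z → ℂ) (hχ : ∀ A, HasFiniteOrder (χ A))
    (ν : (ι → ℤ) → (ι → ℤ) → ℂ) (hν : ∀ x y, HasFiniteOrder (ν x y))
    (f : ℚ × (ι → ℚ) → ℂ) (φ : ℂ → (ι → ℂ) → ℂ)
    (hφ : IsJacobiForm S k t χ ν f φ)
    (τ₀ : ℂ) (hτ₀ : 0 < τ₀.im) (z₀ : ι → ℂ) (h0 : φ τ₀ z₀ ≠ 0)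
    (x y : ι → ℤ) : ν (fun i => 2 * x i) (fun i => 2 * y i) = 1 := by
  have hell := hφ.elliptic
  have hνne : ∀ a b : ι → ℤ, ν a b ≠ 0 := fun a b => hfo_ne_zero (hν a b)
  -- cocycle relation
  have key : ∀ x y x' y' : ι → ℤ,
      ν (fun i => x i + x' i) (fun i => y i + y' i)
        = ν x y * ν x' y'
          * Complex.exp (-((π : ℂ) * I * (t : ℂ)) * (2 * (bilinZ S x y' : ℂ))) := by
    intro x y x' y'
    have h1 := hell (fun i => x i + x' i) (fun i => y i + y' i) τ₀ hτ₀ z₀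
    have h2 := hell x y τ₀ hτ₀ (fun i => z₀ i + (x' i : ℂ) * τ₀ + (y' i : ℂ))
    have h3 := hell x' y' τ₀ hτ₀ z₀
    rw [h3] at h2
    have harg : (fun i => z₀ i + ((x i + x' i : ℤ) : ℂ) * τ₀ + ((y i + y' i : ℤ) : ℂ))
        = (fun i => (z₀ i + (x' i : ℂ) * τ₀ + (y' i : ℂ)) + (x i : ℂ) * τ₀ + (y i : ℂ)) := by
      funext i; push_cast; ring
    rw [harg, h2] at h1
    -- exponent bookkeeping
    set P := Complex.exp (-((π : ℂ) * I * (t : ℂ))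
      * ((bilinZ S (fun i => x i + x' i) (fun i => x i + x' i) : ℂ) * τ₀
        + 2 * bilinC S (fun i => ((x i + x' i : ℤ) : ℂ)) z₀)) with hP
    have hQR : Complex.exp (-((π : ℂ) * I * (t : ℂ)) * ((bilinZ S x x : ℂ) * τ₀
          + 2 * bilinC S (fun i => (x i : ℂ)) (fun i => z₀ i + (x' i : ℂ) * τ₀ + (y' i : ℂ))))
        * Complex.exp (-((π : ℂ) * I * (t : ℂ)) * ((bilinZ S x' x' : ℂ) * τ₀
          + 2 * bilinC S (fun i => (x' i : ℂ)) z₀))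
        = Complex.exp (-((π : ℂ) * I * (t : ℂ)) * (2 * (bilinZ S x y' : ℂ))) * P := by
      rw [hP, ← Complex.exp_add, ← Complex.exp_add]
      congr 1
      rw [bilinC_expand, bilinC_addl, bilinZ_add_add hS]
      push_cast
      ring
    have hstep : ν (fun i => x i + x' i) (fun i => y i + y' i) * P * φ τ₀ z₀
        = (ν x y * ν x' y'
            * Complex.exp (-((π : ℂ) * I * (t : ℂ)) * (2 * (bilinZ S x y' : ℂ)))) * P * φ τ₀ z₀ := by
      linear_combination -h1 + (ν x y * ν x' y' * φ τ₀ z₀) * hQR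
    exact mul_right_cancel₀ (Complex.exp_ne_zero _)
      (mul_right_cancel₀ h0 (by rw [mul_assoc, mul_assoc] at hstep ⊢; exact hstep))
  -- the zero vector
  set Z : ι → ℤ := fun _ => 0 with hZ
  have hE0 : ∀ b : ι → ℤ, Complex.exp (-((π : ℂ) * I * (t : ℂ)) * (2 * (bilinZ S Z b : ℂ))) = 1 := by
    intro b; rw [hZ, bilinZ_zero]; simp
  -- exponential triviality
  have e1 : ∀ a b : ι → ℤ,
      Complex.exp (-((π : ℂ) * I * (t : ℂ)) * (2 * (bilinZ S a b : ℂ))) = 1 := by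
    intro a b
    have h1 := key a Z Z b
    have h2 := key Z b a Z
    have n1 : (fun i => a i + Z i) = a := funext fun i => by simp [hZ]
    have n2 : (fun i => Z i + b i) = b := funext fun i => by simp [hZ]
    have n3 : (fun i => b i + Z i) = b := funext fun i => by simp [hZ]
    have n4 : (fun i => Z i + a i) = a := funext fun i => by simp [hZ]
    rw [n1, n2] at h1
    rw [n4, n3, hE0, mul_one] at h2
    have h4 := h1.symm.trans h2
    have h5 : ν a Z * ν Z b * Complex.exp (-((π : ℂ) * I * (t : ℂ)) * (2 * (bilinZ S a b : ℂ)))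
        = ν a Z * ν Z b * 1 := by rw [mul_one]; linear_combination h4
    exact mul_left_cancel₀ (mul_ne_zero (hνne a Z) (hνne Z b)) h5
  -- value at the origin
  have hν00 : ν Z Z = 1 := by
    have h1 := key Z Z Z Z
    rw [hE0, mul_one, (funext fun i => by simp [hZ] : (fun i => Z i + Z i) = Z)] at h1
    have h5 : ν Z Z * ν Z Z = ν Z Z * 1 := by rw [mul_one]; linear_combination -h1
    exact mul_left_cancel₀ (hνne Z Z) h5
  -- the element -1 of SL2
  have hdet : (!![-1, 0; 0, -1] : Matrix (Fin 2) (Fin 2) ℤ).det = 1 := by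
    simp [Matrix.det_fin_two_of]
  have negI : ∀ w : ι → ℂ,
      φ τ₀ (fun i => -w i) = χ ⟨!![-1, 0; 0, -1], hdet⟩ * (-1 : ℂ) ^ (k : ℂ) * φ τ₀ w := by
    intro w
    have h := hφ.modular ⟨!![-1, 0; 0, -1], hdet⟩ τ₀ hτ₀ w
    norm_num [Matrix.cons_val_zero, Matrix.cons_val_one, Matrix.head_cons] at h
    rw [show (fun i => -w i) = (fun i => w i / -1) from funext fun i => by ring]
    exact h
  have hCne : χ ⟨!![-1, 0; 0, -1], hdet⟩ * (-1 : ℂ) ^ (k : ℂ) ≠ 0 :=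
    mul_ne_zero (hfo_ne_zero (hχ _)) (by
      intro h
      rw [Complex.cpow_eq_zero_iff] at h
      exact (neg_ne_zero.mpr one_ne_zero) h.1)
  -- parity invariance of the character
  have hνneg : ∀ a b : ι → ℤ, ν (fun i => -a i) (fun i => -b i) = ν a b := by
    intro a b
    have h1 := hell (fun i => -a i) (fun i => -b i) τ₀ hτ₀ (fun i => -z₀ i)
    have harg : (fun i => -z₀ i + ((-a i : ℤ) : ℂ) * τ₀ + ((-b i : ℤ) : ℂ))
        = (fun i => -(z₀ i + (a i : ℂ) * τ₀ + (b i : ℂ))) := by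
      funext i; push_cast; ring
    rw [harg, negI, hell a b τ₀ hτ₀ z₀, negI, bilinZ_neg_neg, bilinC_neg_neg] at h1
    exact mul_right_cancel₀
      (mul_ne_zero (mul_ne_zero (Complex.exp_ne_zero _) hCne) h0)
      (by linear_combination -h1)
  -- assembling everything
  have h2x : (fun i => 2 * x i) = (fun i => x i + x i) := funext fun i => two_mul (x i)
  have h2y : (fun i => 2 * y i) = (fun i => y i + y i) := funext fun i => two_mul (y i)
  rw [h2x, h2y, key x y x y, e1, mul_one]
  have hxy1 : ν x y = ν x Z * ν Z y := by
    have h1 := key x Z Z y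
    rw [e1, mul_one, (funext fun i => by simp [hZ] : (fun i => x i + Z i) = x),
        (funext fun i => by simp [hZ] : (fun i => Z i + y i) = y)] at h1
    exact h1
  have hnegZ : (fun i => -Z i) = Z := funext fun i => by simp [hZ]
  have hx2 : ν x Z * ν x Z = 1 := by
    have h1 := key x Z (fun i => -x i) Z
    rw [e1, mul_one, (funext fun i => by simp [hZ] : (fun i => x i + -x i) = Z),
        (funext fun i => by simp [hZ] : (fun i => Z i + Z i) = Z), hν00] at h1
    have hnz : ν (fun i => -x i) Z = ν x Z := by
      have h2 := hνneg x Z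
      rw [hnegZ] at h2
      exact h2
    rw [hnz] at h1
    exact h1.symm
  have hy2 : ν Z y * ν Z y = 1 := by
    have h1 := key Z y Z (fun i => -y i)
    rw [e1, mul_one, (funext fun i => by simp [hZ] : (fun i => y i + -y i) = Z),
        (funext fun i => by simp [hZ] : (fun i => Z i + Z i) = Z), hν00] at h1
    have hnz : ν Z (fun i => -y i) = ν Z y := by
      have h2 := hνneg Z y
      rw [hnegZ] at h2
      exact h2
    rw [hnz] at h1
    exact h1.symm
  rw [hxy1]
  linear_combination (ν Z y * ν Z y) * hx2 + hy2

end Nu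

/-- Reindexing of Fourier coefficients: `(n, l) ↦ (n, l/2)`. -/
def halfEquiv (ι : Type*) : (ℚ × (ι → ℚ)) ≃ (ℚ × (ι → ℚ)) where
  toFun p := (p.1, fun i => p.2 i / 2)
  invFun p := (p.1, fun i => 2 * p.2 i)
  left_inv p := by
    obtain ⟨a, b⟩ := p
    refine Prod.ext_iff.mpr ⟨rfl, ?_⟩
    funext i
    show 2 * (b i / 2) = b i
    field_simp
  right_inv p := by
    obtain ⟨a, b⟩ := p
    refine Prod.ext_iff.mpr ⟨rfl, ?_⟩
    funext i
    show 2 * b i / 2 = b i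
    field_simp

/-- If `φ` is a Jacobi form of weight `k` and index `t` for `L`, then
`ψ(τ,𝔷) := φ(τ,2𝔷)` is a Jacobi form of weight `k` and index `4t` for `L`, with the same
`SL₂(ℤ)`-character and trivial Heisenberg character. -/
theorem statement4 {ι : Type*} [Fintype ι] (S : Matrix ι ι ℤ) (hS : IsEvenPosDef S)
    (k t : ℚ) (ht : 0 < t)
    (χ : SL2Z → ℂ) (hχ : ∀ A, HasFiniteOrder (χ A))
    (ν : (ι → ℤ) → (ι → ℤ) → ℂ) (hν : ∀ x y, HasFiniteOrder (ν x y))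
    (f : ℚ × (ι → ℚ) → ℂ) (φ : ℂ → (ι → ℂ) → ℂ)
    (hφ : IsJacobiForm S k t χ ν f φ) :
    ∃ g : ℚ × (ι → ℚ) → ℂ,
      IsJacobiForm S k (4 * t) χ (fun _ _ => 1) g
        (fun τ z => φ τ (fun i => 2 * z i)) := by
  refine ⟨fun p => f (p.1, fun i => p.2 i / 2), ?_, ?_, ?_, ?_, ?_⟩
  · -- holomorphy
    have hlin : Differentiable ℂ
        (fun p : ℂ × (ι → ℂ) => ((p.1, fun i => 2 * p.2 i) : ℂ × (ι → ℂ))) := by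
      refine Differentiable.prodMk differentiable_fst ?_
      exact (differentiable_snd (𝕜 := ℂ) (E := ℂ) (F := ι → ℂ)).const_smul (2 : ℂ)
    exact DifferentiableOn.comp hφ.holo hlin.differentiableOn (fun p hp => hp)
  · -- modularity
    intro A τ hτ z
    have h := hφ.modular A τ hτ (fun i => 2 * z i)
    have harg : (fun i => (2 * z i) / ((A.1 1 0 : ℂ) * τ + (A.1 1 1 : ℂ)))
        = (fun i => 2 * (z i / ((A.1 1 0 : ℂ) * τ + (A.1 1 1 : ℂ)))) := by
      funext i; ring
    rw [harg] at h
    rw [h]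
    congr 2
    rw [bilinC_two_two]
    push_cast
    ring
  · -- ellipticity
    intro x y τ hτ z
    have harg : (fun i => 2 * (z i + (x i : ℂ) * τ + (y i : ℂ)))
        = (fun i => (2 * z i) + ((2 * x i : ℤ) : ℂ) * τ + ((2 * y i : ℤ) : ℂ)) := by
      funext i; push_cast; ring
    show φ τ (fun i => 2 * (z i + (x i : ℂ) * τ + (y i : ℂ))) = _
    rw [harg, hφ.elliptic (fun i => 2 * x i) (fun i => 2 * y i) τ hτ (fun i => 2 * z i)]
    by_cases hvan : ∀ τ' : ℂ, 0 < τ'.im → ∀ z' : ι → ℂ, φ τ' z' = 0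
    · rw [hvan τ hτ (fun i => 2 * z i)]
      ring
    · push_neg at hvan
      obtain ⟨τ₀, hτ₀, z₀, h0⟩ := hvan
      rw [nu_double_trivial S hS.symm k t χ hχ ν hν f φ hφ τ₀ hτ₀ z₀ h0 x y]
      have hexp : Complex.exp (-((π : ℂ) * I * (t : ℂ))
            * ((bilinZ S (fun i => 2 * x i) (fun i => 2 * x i) : ℂ) * τ
              + 2 * bilinC S (fun i => ((2 * x i : ℤ) : ℂ)) (fun i => 2 * z i)))
          = Complex.exp (-((π : ℂ) * I * ((4 * t : ℚ) : ℂ))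
            * ((bilinZ S x x : ℂ) * τ + 2 * bilinC S (fun i => (x i : ℂ)) z)) := by
        congr 1
        rw [bilinZ_two_two,
          show (fun i => ((2 * x i : ℤ) : ℂ)) = (fun i => 2 * ((x i : ℤ) : ℂ)) from
            funext fun i => by push_cast; ring,
          bilinC_two_two]
        push_cast
        ring
      rw [hexp]
  · -- support
    rintro ⟨n, l⟩ hg
    obtain ⟨h1, h2, h3⟩ := hφ.support _ hg
    refine ⟨h1, ?_, ?_⟩
    · intro v
      obtain ⟨m, hm⟩ := h2 v
      refine ⟨2 * m, ?_⟩
      have hb : bilinQ S l (fun i => (v i : ℚ))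
          = 2 * bilinQ S (fun i => l i / 2) (fun i => (v i : ℚ)) := by
        rw [bilinQ_half]; ring
      rw [hb]
      push_cast
      linarith [hm]
    · have hb : bilinQ S l l = 4 * bilinQ S (fun i => l i / 2) (fun i => l i / 2) := by
        rw [bilinQ_half_half]; ring
      rw [hb]
      have : 0 ≤ 2 * n * t - bilinQ S (fun i => l i / 2) (fun i => l i / 2) := h3
      nlinarith [this]
  · -- expansion
    intro τ hτ z
    have H := hφ.expansion τ hτ (fun i => 2 * z i)
    have hfun : (fun p : ℚ × (ι → ℚ) => f (p.1, fun i => p.2 i / 2)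
          * Complex.exp (2 * (π : ℂ) * I *
            ((p.1 : ℂ) * τ + bilinC S (fun i => ((p.2 i : ℚ) : ℂ)) z)))
        = (fun p : ℚ × (ι → ℚ) => f p
          * Complex.exp (2 * (π : ℂ) * I *
            ((p.1 : ℂ) * τ + bilinC S (fun i => ((p.2 i : ℚ) : ℂ)) (fun i => 2 * z i))))
          ∘ (halfEquiv ι) := by
      funext p
      simp only [Function.comp_apply, halfEquiv, Equiv.coe_fn_mk]
      rw [bilinC_half_double]
    rw [hfun]
    exact (Equiv.hasSum_iff (halfEquiv ι)).mpr H
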